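/- There exist g1, g2, g3 in K such that (X-1)*(X-L)*(X-L^2)*(X-L^3)*(X-L^{-1})*(X-L^{-2})*(X-L^{-3}) = X^7 + g1*X^6 + g2*X^5 + g3*X^4 - g3*X^3 - g2*X^2 - g1*X - 1 as polynomials in K[X], and these g1, g2, g3 satisfy the three relations: (1) g1^2 - g1 - g2 + g3 = 0; (2) g1^2*g2 - g1*g2^2 - g2^3 + 2*g1^2*g3 - g1*g3^2 = 0; (3) g2^4 - g1*g2^2*g3 - g2^3*g3 + g1*g2*g3^2 - g1*g3^3 - g2^3 + g2^2*g3 + 2*g2*g3^2 - g3^3 = 0. -/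
import Mathlib

open Polynomial

set_option maxHeartbeats 4000000 in
/-- The characteristic polynomial of the image of an element of `PGL₂` with eigenvalue ratio
`L` under the 7-dimensional representation `PGL₂ → G₂` has the `G₂`-palindromic shape, and its
coefficients `g1, g2, g3` satisfy the three relations of Section 5.5. -/
theorem stmt7 {K : Type*} [Field K] (L : K) (hL : L ≠ 0) :
    ∃ g1 g2 g3 : K,
      (X - 1) * (X - C L) * (X - C (L^2)) * (X - C (L^3)) *
          (X - C L⁻¹) * (X - C ((L^2)⁻¹)) * (X - C ((L^3)⁻¹)) =
        X^7 + C g1 * X^6 + C g2 * X^5 + C g3 * X^4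
          - C g3 * X^3 - C g2 * X^2 - C g1 * X - 1 ∧
      g1^2 - g1 - g2 + g3 = 0 ∧
      g1^2*g2 - g1*g2^2 - g2^3 + 2*g1^2*g3 - g1*g3^2 = 0 ∧
      g2^4 - g1*g2^2*g3 - g2^3*g3 + g1*g2*g3^2 - g1*g3^3
        - g2^3 + g2^2*g3 + 2*g2*g3^2 - g3^3 = 0 := by
  set M := L⁻¹ with hMdef
  have hM : L * M = 1 := mul_inv_cancel₀ hL
  have h2 : (L^2)⁻¹ = M^2 := (inv_pow L 2).symm
  have h3 : (L^3)⁻¹ = M^3 := (inv_pow L 3).symm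
  rw [h2, h3]
  refine ⟨-(1:K) - M - M^2 - M^3 - L - L^2 - L^3,
    (3:K) + (3:K)*M + (2:K)*M^2 + (2:K)*M^3 + M^4 + M^5 + (3:K)*L + (2:K)*L^2 + (2:K)*L^3 + L^4 + L^5,
    -(5:K) - (4:K)*M - (4:K)*M^2 - (3:K)*M^3 - (2:K)*M^4 - M^5 - M^6 - (4:K)*L - (4:K)*L^2 - (3:K)*L^3 - (2:K)*L^4 - L^5 - L^6, ?_, ?_, ?_, ?_⟩
  · have hC : (C L) * (C M) = 1 := by rw [← C_mul, hM, C_1]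
    simp only [map_add, map_mul, map_pow, map_neg, map_sub, map_one, map_ofNat]
    linear_combination (-(1:K[X]) + X - (3:K[X])*X^2 + (5:K[X])*X^3 - (5:K[X])*X^4 + (3:K[X])*X^5 + C M*X - (3:K[X])*C M*X^2 + (4:K[X])*C M*X^3 - (4:K[X])*C M*X^4 + (2:K[X])*C M*X^5 + C M^2*X - (2:K[X])*C M^2*X^2 + (4:K[X])*C M^2*X^3 - (4:K[X])*C M^2*X^4 + C M^2*X^5 + C M^3*X - (2:K[X])*C M^3*X^2 + (3:K[X])*C M^3*X^3 - (2:K[X])*C M^3*X^4 - C M^4*X^2 + (2:K[X])*C M^4*X^3 - C M^4*X^4 - C M^5*X^2 + C M^5*X^3 + C L*X - (3:K[X])*C L*X^2 + (4:K[X])*C L*X^3 - (4:K[X])*C L*X^4 + (2:K[X])*C L*X^5 - C L*C M + C L*C M*X - (3:K[X])*C L*C M*X^2 + (5:K[X])*C L*C M*X^3 - (4:K[X])*C L*C M*X^4 + (2:K[X])*C L*C M*X^5 + C L*C M^2*X - (3:K[X])*C L*C M^2*X^2 + (4:K[X])*C L*C M^2*X^3 - (3:K[X])*C L*C M^2*X^4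 + C L*C M^2*X^5 + C L*C M^3*X - (2:K[X])*C L*C M^3*X^2 + (3:K[X])*C L*C M^3*X^3 - (2:K[X])*C L*C M^3*X^4 + C L*C M^4*X - (2:K[X])*C L*C M^4*X^2 + (2:K[X])*C L*C M^4*X^3 - C L*C M^4*X^4 - C L*C M^5*X^2 + C L*C M^5*X^3 + C L^2*X - (2:K[X])*C L^2*X^2 + (4:K[X])*C L^2*X^3 - (4:K[X])*C L^2*X^4 + C L^2*X^5 + C L^2*C M*X - (3:K[X])*C L^2*C M*X^2 + (4:K[X])*C L^2*C M*X^3 - (3:K[X])*C L^2*C M*X^4 + C L^2*C M*X^5 - C L^2*C M^2 + C L^2*C M^2*X - (3:K[X])*C L^2*C M^2*X^2 + (5:K[X])*C L^2*C M^2*X^3 - (3:K[X])*C L^2*C M^2*X^4 + C L^2*C M^2*X^5 + C L^2*C M^3*X - (3:K[X])*C L^2*C M^3*X^2 + (3:K[X])*C L^2*C M^3*X^3 - C L^2*C M^3*X^4 + C L^2*C M^4*X - (2:K[X])*C L^2*C M^4*X^2 + (2:K[X])*C L^2*C M^4*X^3 - C L^2*C M^4*X^4 + C L^2*C M^5*X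 - (2:K[X])*C L^2*C M^5*X^2 + C L^2*C M^5*X^3 + C L^3*X - (2:K[X])*C L^3*X^2 + (3:K[X])*C L^3*X^3 - (2:K[X])*C L^3*X^4 + C L^3*C M*X - (2:K[X])*C L^3*C M*X^2 + (3:K[X])*C L^3*C M*X^3 - (2:K[X])*C L^3*C M*X^4 + C L^3*C M^2*X - (3:K[X])*C L^3*C M^2*X^2 + (3:K[X])*C L^3*C M^2*X^3 - C L^3*C M^2*X^4 - C L^3*C M^3 + C L^3*C M^3*X - (2:K[X])*C L^3*C M^3*X^2 + (2:K[X])*C L^3*C M^3*X^3 + C L^3*C M^4*X - (2:K[X])*C L^3*C M^4*X^2 + C L^3*C M^4*X^3 + C L^3*C M^5*X - C L^3*C M^5*X^2 - C L^4*X^2 + (2:K[X])*C L^4*X^3 - C L^4*X^4 + C L^4*C M*X - (2:K[X])*C L^4*C M*X^2 + (2:K[X])*C L^4*C M*X^3 - C L^4*C M*X^4 + C L^4*C M^2*X - (2:K[X])*C L^4*C M^2*X^2 + (2:K[X])*C L^4*C M^2*X^3 - C L^4*C M^2*X^4 + C L^4*C M^3*X - (2:K[X])*C L^4*C M^3*X^2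 + C L^4*C M^3*X^3 - C L^4*C M^4 + C L^4*C M^4*X - C L^4*C M^4*X^2 + C L^4*C M^4*X^3 + C L^4*C M^5*X - C L^4*C M^5*X^2 - C L^5*X^2 + C L^5*X^3 - C L^5*C M*X^2 + C L^5*C M*X^3 + C L^5*C M^2*X - (2:K[X])*C L^5*C M^2*X^2 + C L^5*C M^2*X^3 + C L^5*C M^3*X - C L^5*C M^3*X^2 + C L^5*C M^4*X - C L^5*C M^4*X^2 - C L^5*C M^5 + C L^5*C M^5*X) * hC
  · linear_combination ((6:K) + (4:K)*M + (2:K)*M^2 + (4:K)*L + (4:K)*L*M + (2:K)*L*M^2 + (2:K)*L^2 + (2:K)*L^2*M + (2:K)*L^2*M^2) * hM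
  · linear_combination ((8:K)*M + (3:K)*M^2 - (7:K)*M^3 - (8:K)*M^4 + (2:K)*M^6 - (2:K)*M^7 + (3:K)*M^10 + M^11 + (8:K)*L + (30:K)*L*M + (19:K)*L*M^2 + (9:K)*L*M^3 + (8:K)*L*M^4 + (24:K)*L*M^5 + (14:K)*L*M^6 + (6:K)*L*M^7 + (4:K)*L*M^8 + (2:K)*L*M^9 + (3:K)*L*M^10 + L*M^11 + (3:K)*L^2 + (19:K)*L^2*M - (2:K)*L^2*M^2 - (16:K)*L^2*M^3 - (15:K)*L^2*M^4 + (8:K)*L^2*M^5 - L^2*M^6 - (2:K)*L^2*M^7 - L^2*M^8 + (2:K)*L^2*M^10 + L^2*M^11 - (7:K)*L^3 + (9:K)*L^3*M - (16:K)*L^3*M^2 - (30:K)*L^3*M^3 - (28:K)*L^3*M^4 - L^3*M^5 - (11:K)*L^3*M^6 - (9:K)*L^3*M^7 - (5:K)*L^3*M^8 - (3:K)*L^3*M^9 - (8:K)*L^4 + (8:K)*L^4*M - (15:K)*L^4*M^2 - (28:K)*L^4*M^3 - (24:K)*L^4*M^4 + L^4*M^5 - (8:K)*L^4*M^6 - (7:K)*L^4*M^7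 - (4:K)*L^4*M^8 - (3:K)*L^4*M^9 + (24:K)*L^5*M + (8:K)*L^5*M^2 - L^5*M^3 + L^5*M^4 + (22:K)*L^5*M^5 + (8:K)*L^5*M^6 + (4:K)*L^5*M^7 + (2:K)*L^5*M^8 + (2:K)*L^6 + (14:K)*L^6*M - L^6*M^2 - (11:K)*L^6*M^3 - (8:K)*L^6*M^4 + (8:K)*L^6*M^5 - (2:K)*L^7 + (6:K)*L^7*M - (2:K)*L^7*M^2 - (9:K)*L^7*M^3 - (7:K)*L^7*M^4 + (4:K)*L^7*M^5 + (4:K)*L^8*M - L^8*M^2 - (5:K)*L^8*M^3 - (4:K)*L^8*M^4 + (2:K)*L^8*M^5 + (2:K)*L^9*M - (3:K)*L^9*M^3 - (3:K)*L^9*M^4 + (3:K)*L^10 + (3:K)*L^10*M + (2:K)*L^10*M^2 + L^11 + L^11*M + L^11*M^2) * hM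
  · linear_combination (-(174:K) - (454:K)*M - (720:K)*M^2 - (810:K)*M^3 - (785:K)*M^4 - (695:K)*M^5 - (605:K)*M^6 - (453:K)*M^7 - (317:K)*M^8 - (201:K)*M^9 - (138:K)*M^10 - (96:K)*M^11 - (55:K)*M^12 - (33:K)*M^13 - (17:K)*M^14 - (9:K)*M^15 - (5:K)*M^16 - M^17 - (454:K)*L - (1068:K)*L*M - (1444:K)*L*M^2 - (1466:K)*L*M^3 - (1421:K)*L*M^4 - (1385:K)*L*M^5 - (1271:K)*L*M^6 - (971:K)*L*M^7 - (731:K)*L*M^8 - (475:K)*L*M^9 - (344:K)*L*M^10 - (208:K)*L*M^11 - (105:K)*L*M^12 - (55:K)*L*M^13 - (25:K)*L*M^14 - (11:K)*L*M^15 - (5:K)*L*M^16 - L*M^17 - (720:K)*L^2 - (1444:K)*L^2*M - (1516:K)*L^2*M^2 - (1132:K)*L^2*M^3 - (841:K)*L^2*M^4 - (811:K)*L^2*M^5 - (604:K)*L^2*M^6 - (339:K)*L^2*M^7 - (224:K)*L^2*M^8 - (100:K)*L^2*M^9 - (120:K)*L^2*M^10 - (77:K)*L^2*M^11 - (32:K)*L^2*M^12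 - (23:K)*L^2*M^13 - (13:K)*L^2*M^14 - (7:K)*L^2*M^15 - (4:K)*L^2*M^16 - L^2*M^17 - (810:K)*L^3 - (1466:K)*L^3*M - (1132:K)*L^3*M^2 - (370:K)*L^3*M^3 + (19:K)*L^3*M^4 - (91:K)*L^3*M^5 + (143:K)*L^3*M^6 + (308:K)*L^3*M^7 + (275:K)*L^3*M^8 + (274:K)*L^3*M^9 + (121:K)*L^3*M^10 + (80:K)*L^3*M^11 + (62:K)*L^3*M^12 + (28:K)*L^3*M^13 + (11:K)*L^3*M^14 + (3:K)*L^3*M^15 - (785:K)*L^4 - (1421:K)*L^4*M - (841:K)*L^4*M^2 + (19:K)*L^4*M^3 + (310:K)*L^4*M^4 - (42:K)*L^4*M^5 + (232:K)*L^4*M^6 + (321:K)*L^4*M^7 + (258:K)*L^4*M^8 + (244:K)*L^4*M^9 + (99:K)*L^4*M^10 + (65:K)*L^4*M^11 + (52:K)*L^4*M^12 + (24:K)*L^4*M^13 + (10:K)*L^4*M^14 + (3:K)*L^4*M^15 - (695:K)*L^5 - (1385:K)*L^5*M - (811:K)*L^5*M^2 - (91:K)*L^5*M^3 - (42:K)*L^5*M^4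 - (634:K)*L^5*M^5 - (356:K)*L^5*M^6 - (250:K)*L^5*M^7 - (224:K)*L^5*M^8 - (120:K)*L^5*M^9 - (134:K)*L^5*M^10 - (73:K)*L^5*M^11 - (22:K)*L^5*M^12 - (8:K)*L^5*M^13 - (2:K)*L^5*M^14 - (605:K)*L^6 - (1271:K)*L^6*M - (604:K)*L^6*M^2 + (143:K)*L^6*M^3 + (232:K)*L^6*M^4 - (356:K)*L^6*M^5 - (22:K)*L^6*M^6 + (38:K)*L^6*M^7 + (16:K)*L^6*M^8 + (38:K)*L^6*M^9 - (23:K)*L^6*M^10 - (14:K)*L^6*M^11 - (453:K)*L^7 - (971:K)*L^7*M - (339:K)*L^7*M^2 + (308:K)*L^7*M^3 + (321:K)*L^7*M^4 - (250:K)*L^7*M^5 + (38:K)*L^7*M^6 + (58:K)*L^7*M^7 + (30:K)*L^7*M^8 + (36:K)*L^7*M^9 - (8:K)*L^7*M^10 - (7:K)*L^7*M^11 - (317:K)*L^8 - (731:K)*L^8*M - (224:K)*L^8*M^2 + (275:K)*L^8*M^3 + (258:K)*L^8*M^4 - (224:K)*L^8*M^5 + (16:K)*L^8*M^6 + (30:K)*L^8*M^7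 + (18:K)*L^8*M^8 + (22:K)*L^8*M^9 - (2:K)*L^8*M^10 - (3:K)*L^8*M^11 - (201:K)*L^9 - (475:K)*L^9*M - (100:K)*L^9*M^2 + (274:K)*L^9*M^3 + (244:K)*L^9*M^4 - (120:K)*L^9*M^5 + (38:K)*L^9*M^6 + (36:K)*L^9*M^7 + (22:K)*L^9*M^8 + (18:K)*L^9*M^9 + (3:K)*L^9*M^10 - (138:K)*L^10 - (344:K)*L^10*M - (120:K)*L^10*M^2 + (121:K)*L^10*M^3 + (99:K)*L^10*M^4 - (134:K)*L^10*M^5 - (23:K)*L^10*M^6 - (8:K)*L^10*M^7 - (2:K)*L^10*M^8 + (3:K)*L^10*M^9 - (96:K)*L^11 - (208:K)*L^11*M - (77:K)*L^11*M^2 + (80:K)*L^11*M^3 + (65:K)*L^11*M^4 - (73:K)*L^11*M^5 - (14:K)*L^11*M^6 - (7:K)*L^11*M^7 - (3:K)*L^11*M^8 - (55:K)*L^12 - (105:K)*L^12*M - (32:K)*L^12*M^2 + (62:K)*L^12*M^3 + (52:K)*L^12*M^4 - (22:K)*L^12*M^5 - (33:K)*L^13 - (55:K)*L^13*M - (23:K)*L^13*M^2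 + (28:K)*L^13*M^3 + (24:K)*L^13*M^4 - (8:K)*L^13*M^5 - (17:K)*L^14 - (25:K)*L^14*M - (13:K)*L^14*M^2 + (11:K)*L^14*M^3 + (10:K)*L^14*M^4 - (2:K)*L^14*M^5 - (9:K)*L^15 - (11:K)*L^15*M - (7:K)*L^15*M^2 + (3:K)*L^15*M^3 + (3:K)*L^15*M^4 - (5:K)*L^16 - (5:K)*L^16*M - (4:K)*L^16*M^2 - L^17 - L^17*M - L^17*M^2) * hM
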